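/- Let D₁, ..., Dₘ be positive multiplication operators on L²(X,μ) with D₁⋯Dₘ ≥ I. Then for every positive bounded operator A on L²(X,μ), w(A)^m ≤ w(AD₁)·w(AD₂) ⋯ w(ADₘ). -/

import Mathlib

open MeasureTheory ENNReal

/-- The numerical radius of a bounded operator on `L²(X, μ)`. -/
noncomputable def numRad {X : Type*} [MeasurableSpace X] {μ : Measure X}
    (A : Lp ℂ 2 μ →L[ℂ] Lp ℂ 2 μ) : ℝ :=
  sSup {r : ℝ | ∃ f : Lp ℂ 2 μ, ‖f‖ = 1 ∧ r = ‖(inner ℂ (A f) f : ℂ)‖}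

/-- An operator on `L^p(X, μ)` is positive if it maps a.e. nonnegative functions to
a.e. nonnegative functions. -/
def IsPosOp {X : Type*} [MeasurableSpace X] {μ : Measure X} {p : ℝ≥0∞} [Fact (1 ≤ p)]
    (A : Lp ℂ p μ →L[ℂ] Lp ℂ p μ) : Prop :=
  ∀ f : Lp ℂ p μ, (∀ᵐ x ∂μ, 0 ≤ (f x).re ∧ (f x).im = 0) →
    ∀ᵐ x ∂μ, 0 ≤ ((A f) x).re ∧ ((A f) x).im = 0

namespace CohenAux

variable {X : Type*} [MeasurableSpace X] {μ : Measure X}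

lemma max_sub_max (a : ℝ) : max a 0 - max (-a) 0 = a := by
  rcases le_total a 0 with h | h
  · rw [max_eq_right h, max_eq_left (neg_nonneg.2 h)]; ring
  · rw [max_eq_left h, max_eq_right (neg_nonpos.2 h)]; ring

/-- The positive part of the real part, as an element of `L²`. -/
noncomputable def posRe (f : Lp ℂ 2 μ) : Lp ℂ 2 μ :=
  (((Lp.memLp f).re.pos_part).ofReal).toLp _

lemma coeFn_posRe (f : Lp ℂ 2 μ) :
    posRe f =ᵐ[μ] fun x => ((max (f x).re 0 : ℝ) : ℂ) := by
  filter_upwards [MemLp.coeFn_toLp (((Lp.memLp f).re.pos_part).ofReal (K := ℂ))] with x hx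
  rw [posRe] at *
  rw [hx]
  simp [RCLike.re_to_complex]

lemma posRe_nonneg (f : Lp ℂ 2 μ) :
    ∀ᵐ x ∂μ, 0 ≤ ((posRe f) x).re ∧ ((posRe f) x).im = 0 := by
  filter_upwards [coeFn_posRe f] with x hx
  rw [hx]
  simp [le_max_right]

/-- The pointwise absolute value of `f`, as an element of `L²`. -/
noncomputable def absLp (f : Lp ℂ 2 μ) : Lp ℂ 2 μ :=
  (((Lp.memLp f).norm).ofReal).toLp _

lemma coeFn_absLp (f : Lp ℂ 2 μ) :
    absLp f =ᵐ[μ] fun x => ((‖f x‖ : ℝ) : ℂ) :=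
  MemLp.coeFn_toLp _

lemma absLp_nonneg (f : Lp ℂ 2 μ) :
    ∀ᵐ x ∂μ, 0 ≤ ((absLp f) x).re ∧ ((absLp f) x).im = 0 := by
  filter_upwards [coeFn_absLp f] with x hx
  rw [hx]
  simp [norm_nonneg]

lemma norm_absLp (f : Lp ℂ 2 μ) : ‖absLp f‖ = ‖f‖ := by
  rw [absLp, Lp.norm_toLp _ _, Lp.norm_def]
  congr 1
  apply eLpNorm_congr_norm_ae
  filter_upwards with x
  simp

lemma decomp (f : Lp ℂ 2 μ) :
    f = (posRe f - posRe (-f)) +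
      Complex.I • (posRe ((-Complex.I) • f) - posRe (Complex.I • f)) := by
  apply Lp.ext
  filter_upwards [coeFn_posRe f, coeFn_posRe (-f), coeFn_posRe ((-Complex.I) • f),
    coeFn_posRe (Complex.I • f), Lp.coeFn_neg f, Lp.coeFn_smul (-Complex.I) f,
    Lp.coeFn_smul Complex.I f,
    Lp.coeFn_add (posRe f - posRe (-f))
      (Complex.I • (posRe ((-Complex.I) • f) - posRe (Complex.I • f))),
    Lp.coeFn_sub (posRe f) (posRe (-f)),
    Lp.coeFn_sub (posRe ((-Complex.I) • f)) (posRe (Complex.I • f)),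
    Lp.coeFn_smul Complex.I (posRe ((-Complex.I) • f) - posRe (Complex.I • f))]
    with x h1 h2 h3 h4 hneg hsm1 hsm2 hadd hsub1 hsub2 hsmul
  rw [hadd, Pi.add_apply, hsub1, Pi.sub_apply, h1, h2, hsmul, Pi.smul_apply, hsub2,
    Pi.sub_apply, h3, h4, hneg, Pi.neg_apply, hsm1, Pi.smul_apply, hsm2, Pi.smul_apply]
  simp only [smul_eq_mul]
  rw [show ((-Complex.I) * f x).re = (f x).im by simp,
    show (Complex.I * f x).re = -(f x).im by simp,
    show (-(f x)).re = -(f x).re by simp,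
    ← Complex.ofReal_sub, ← Complex.ofReal_sub, max_sub_max, max_sub_max]
  simp [Complex.ext_iff]

lemma mono {A : Lp ℂ 2 μ →L[ℂ] Lp ℂ 2 μ} (hA : IsPosOp A) {u v : Lp ℂ 2 μ}
    (hu : ∀ᵐ x ∂μ, 0 ≤ (u x).re ∧ (u x).im = 0)
    (huv : ∀ᵐ x ∂μ, (u x).re ≤ (v x).re ∧ (v x).im = 0) :
    ∀ᵐ x ∂μ, ((A u) x).re ≤ ((A v) x).re ∧ ((A v) x).im = 0 := by
  have h2 : ∀ᵐ x ∂μ, 0 ≤ ((v - u) x).re ∧ ((v - u) x).im = 0 := by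
    filter_upwards [hu, huv, Lp.coeFn_sub v u] with x h h' hs
    rw [hs, Pi.sub_apply]
    simp only [Complex.sub_re, Complex.sub_im]
    exact ⟨by linarith [h'.1], by rw [h'.2, h.2]; ring⟩
  have h1 := hA u hu
  have h3 := hA (v - u) h2
  have h4 : A v = A u + A (v - u) := by rw [← map_add]; congr 1; abel
  have h5 : ⇑(A v) =ᵐ[μ] ⇑(A u) + ⇑(A (v - u)) := by
    rw [h4]; exact Lp.coeFn_add _ _
  filter_upwards [h1, h3, h5] with x hx1 hx3 hx5
  rw [hx5, Pi.add_apply]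
  simp only [Complex.add_re, Complex.add_im]
  exact ⟨by linarith [hx3.1], by rw [hx1.2, hx3.2]; ring⟩

lemma complex_abs_le (z : ℂ) (c : ℝ)
    (h : ∀ q : ℚ, (Complex.exp (((q : ℝ) : ℂ) * Complex.I) * z).re ≤ c) : ‖z‖ ≤ c := by
  have hall : ∀ θ : ℝ, (Complex.exp ((θ : ℂ) * Complex.I) * z).re ≤ c := by
    have hcl : IsClosed {θ : ℝ | (Complex.exp ((θ : ℂ) * Complex.I) * z).re ≤ c} := by
      apply isClosed_le _ continuous_const
      exact Complex.continuous_re.comp ((Complex.continuous_exp.comp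
        (Complex.continuous_ofReal.mul continuous_const)).mul continuous_const)
    intro θ
    have hθ : θ ∈ closure (Set.range ((↑) : ℚ → ℝ)) := by
      rw [Rat.denseRange_cast.closure_eq]; trivial
    exact closure_minimal (by rintro _ ⟨q, rfl⟩; exact h q) hcl hθ
  have key := hall (-Complex.arg z)
  have hexp1 : Complex.exp (((-Complex.arg z : ℝ) : ℂ) * Complex.I) *
      Complex.exp ((Complex.arg z : ℂ) * Complex.I) = 1 := by
    rw [← Complex.exp_add,
      show ((-Complex.arg z : ℝ) : ℂ) * Complex.I + (Complex.arg z : ℂ) * Complex.I = 0 by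
        push_cast; ring,
      Complex.exp_zero]
  have hz : Complex.exp (((-Complex.arg z : ℝ) : ℂ) * Complex.I) * z = (‖z‖ : ℂ) := by
    calc Complex.exp (((-Complex.arg z : ℝ) : ℂ) * Complex.I) * z
        = Complex.exp (((-Complex.arg z : ℝ) : ℂ) * Complex.I) *
          ((‖z‖ : ℂ) * Complex.exp ((Complex.arg z : ℂ) * Complex.I)) := by
            rw [Complex.norm_mul_exp_arg_mul_I z]
      _ = (Complex.exp (((-Complex.arg z : ℝ) : ℂ) * Complex.I) *
          Complex.exp ((Complex.arg z : ℂ) * Complex.I)) * (‖z‖ : ℂ) := by ring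
      _ = (‖z‖ : ℂ) := by rw [hexp1, one_mul]
      _ = (‖z‖ : ℂ) := rfl
  rw [hz] at key
  simpa using key

lemma abs_A_le {A : Lp ℂ 2 μ →L[ℂ] Lp ℂ 2 μ} (hA : IsPosOp A) (f : Lp ℂ 2 μ) :
    ∀ᵐ x ∂μ, ‖(A f) x‖ ≤ ((A (absLp f)) x).re := by
  have key : ∀ θ : ℝ, ∀ᵐ x ∂μ,
      (Complex.exp ((θ : ℂ) * Complex.I) * (A f) x).re ≤ ((A (absLp f)) x).re := by
    intro θ
    set c : ℂ := Complex.exp ((θ : ℂ) * Complex.I) with hc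
    have hcn : ‖c‖ = 1 := by
      rw [hc]
      exact Complex.norm_exp_ofReal_mul_I θ
    set h := c • f with hh
    have hAh : A h = (A (posRe h) - A (posRe (-h))) +
        Complex.I • (A (posRe ((-Complex.I) • h)) - A (posRe (Complex.I • h))) := by
      conv_lhs => rw [decomp h]
      simp only [map_add, map_sub, _root_.map_smul]
    have hle : ∀ᵐ x ∂μ, ((posRe h) x).re ≤ ((absLp f) x).re ∧ ((absLp f) x).im = 0 := by
      filter_upwards [coeFn_posRe h, coeFn_absLp f, Lp.coeFn_smul c f] with x h1 h2 h3
      rw [h1, h2]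
      simp only [Complex.ofReal_re, Complex.ofReal_im]
      refine ⟨max_le ?_ (norm_nonneg _), by simp⟩
      calc (h x).re ≤ ‖h x‖ := Complex.re_le_norm _
        _ = ‖f x‖ := by
            rw [hh, h3, Pi.smul_apply, smul_eq_mul, norm_mul, hcn, one_mul]
    have hmono := mono hA (posRe_nonneg h) hle
    have hN := hA _ (posRe_nonneg (-h))
    have hP' := hA _ (posRe_nonneg ((-Complex.I) • h))
    have hN' := hA _ (posRe_nonneg (Complex.I • h))
    have hAh2 : ⇑(A h) =ᵐ[μ] fun x =>
        ((A (posRe h)) x - (A (posRe (-h))) x) +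
          Complex.I * ((A (posRe ((-Complex.I) • h))) x - (A (posRe (Complex.I • h))) x) := by
      rw [hAh]
      filter_upwards [Lp.coeFn_add (A (posRe h) - A (posRe (-h)))
          (Complex.I • (A (posRe ((-Complex.I) • h)) - A (posRe (Complex.I • h)))),
        Lp.coeFn_sub (A (posRe h)) (A (posRe (-h))),
        Lp.coeFn_sub (A (posRe ((-Complex.I) • h))) (A (posRe (Complex.I • h))),
        Lp.coeFn_smul Complex.I (A (posRe ((-Complex.I) • h)) - A (posRe (Complex.I • h)))]
        with x e1 e2 e3 e4
      rw [e1, Pi.add_apply, e2, Pi.sub_apply, e4, Pi.smul_apply, e3, Pi.sub_apply]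
      simp [smul_eq_mul]
    have hcf : ⇑(A h) =ᵐ[μ] fun x => c * (A f) x := by
      have hAcf : A h = c • A f := by rw [hh, A.map_smul]
      rw [hAcf]
      filter_upwards [Lp.coeFn_smul c (A f)] with x e
      rw [e, Pi.smul_apply, smul_eq_mul]
    filter_upwards [hmono, hN, hP', hN', hAh2, hcf] with x m1 m2 m3 m4 e1 e2
    have hre : (c * (A f) x).re = ((A (posRe h)) x).re - ((A (posRe (-h))) x).re := by
      rw [← e2, e1]
      simp only [Complex.add_re, Complex.sub_re, Complex.mul_re, Complex.I_re, Complex.I_im,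
        Complex.sub_im, zero_mul, one_mul, zero_sub]
      rw [m3.2, m4.2]
      ring
    rw [hre]
    linarith [m1.1, m2.1]
  have key2 : ∀ᵐ x ∂μ, ∀ q : ℚ,
      (Complex.exp (((q : ℝ) : ℂ) * Complex.I) * (A f) x).re ≤ ((A (absLp f)) x).re :=
    ae_all_iff.2 fun q => key (q : ℝ)
  filter_upwards [key2] with x hx
  exact complex_abs_le _ _ hx

lemma coeFn_sum {ι : Type*} (s : Finset ι) (F : ι → Lp ℂ 2 μ) :
    ⇑(∑ i ∈ s, F i) =ᵐ[μ] fun x => ∑ i ∈ s, F i x := by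
  classical
  induction s using Finset.induction_on with
  | empty =>
    simp only [Finset.sum_empty]
    filter_upwards [Lp.coeFn_zero ℂ 2 μ] with x h
    simpa using h
  | insert a t hni ih =>
    rw [Finset.sum_insert hni]
    filter_upwards [Lp.coeFn_add (F a) (∑ i ∈ t, F i), ih] with x h1 h2
    rw [h1, Pi.add_apply, h2, Finset.sum_insert hni]

lemma bddAbove_numRadSet (T : Lp ℂ 2 μ →L[ℂ] Lp ℂ 2 μ) :
    BddAbove {r : ℝ | ∃ f : Lp ℂ 2 μ, ‖f‖ = 1 ∧ r = ‖(inner ℂ (T f) f : ℂ)‖} := by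
  refine ⟨‖T‖, ?_⟩
  rintro r ⟨f, hf, rfl⟩
  calc ‖(inner ℂ (T f) f : ℂ)‖ ≤ ‖T f‖ * ‖f‖ := norm_inner_le_norm _ _
    _ ≤ ‖T‖ * ‖f‖ * ‖f‖ :=
        mul_le_mul_of_nonneg_right (T.le_opNorm f) (norm_nonneg f)
    _ = ‖T‖ := by rw [hf]; ring

lemma numRad_nonneg (T : Lp ℂ 2 μ →L[ℂ] Lp ℂ 2 μ) : 0 ≤ numRad T := by
  by_cases hne : {r : ℝ | ∃ f : Lp ℂ 2 μ, ‖f‖ = 1 ∧ r = ‖(inner ℂ (T f) f : ℂ)‖}.Nonempty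
  · obtain ⟨r, hr⟩ := hne
    have h0 : 0 ≤ r := by obtain ⟨f, _, rfl⟩ := hr; exact norm_nonneg _
    exact h0.trans (le_csSup (bddAbove_numRadSet T) hr)
  · rw [show numRad T = sSup {r : ℝ | ∃ f : Lp ℂ 2 μ, ‖f‖ = 1 ∧ r = ‖(inner ℂ (T f) f : ℂ)‖}
      from rfl, Set.not_nonempty_iff_eq_empty.1 hne, Real.sSup_empty]

lemma scalar_opt {m : ℕ} (hm : 0 < m) (s : ℝ) (hs : 0 ≤ s) (t : Fin m → ℝ) (ht : ∀ i, 0 ≤ t i)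
    (h : ∀ c : Fin m → ℝ, (∀ i, 0 < c i) → ∏ i, c i = 1 → s ≤ (m : ℝ)⁻¹ * ∑ i, c i * t i) :
    s ^ m ≤ ∏ i, t i := by
  classical
  have hmR : (0 : ℝ) < m := by exact_mod_cast hm
  by_cases hpos : ∀ i, 0 < t i
  · have hPpos : 0 < ∏ i, t i := Finset.prod_pos fun i _ => hpos i
    set P := ∏ i, t i with hP
    have hroot : (P ^ ((m : ℝ)⁻¹)) ^ m = P := by
      rw [← Real.rpow_natCast (P ^ ((m : ℝ)⁻¹)) m, ← Real.rpow_mul hPpos.le,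
        inv_mul_cancel₀ hmR.ne', Real.rpow_one]
    have h1 : ∀ i, 0 < P ^ ((m : ℝ)⁻¹) / t i := fun i =>
      div_pos (Real.rpow_pos_of_pos hPpos _) (hpos i)
    have h2 : ∏ i, (P ^ ((m : ℝ)⁻¹) / t i) = 1 := by
      rw [Finset.prod_div_distrib, Finset.prod_const, Finset.card_univ, Fintype.card_fin,
        hroot]
      exact div_self hPpos.ne'
    have h3 := h _ h1 h2
    have h4 : ∑ i, (P ^ ((m : ℝ)⁻¹) / t i) * t i = m * P ^ ((m : ℝ)⁻¹) := by
      rw [Finset.sum_congr rfl fun i _ => div_mul_cancel₀ _ (hpos i).ne']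
      simp [Finset.sum_const, Finset.card_univ, mul_comm]
    rw [h4, inv_mul_cancel_left₀ hmR.ne'] at h3
    calc s ^ m ≤ (P ^ ((m : ℝ)⁻¹)) ^ m := pow_le_pow_left₀ hs h3 m
      _ = P := hroot
  · push_neg at hpos
    obtain ⟨j, hj⟩ := hpos
    have hj0 : t j = 0 := le_antisymm hj (ht j)
    have hP0 : ∏ i, t i = 0 := Finset.prod_eq_zero (Finset.mem_univ j) hj0
    rw [hP0]
    have hbound : ∀ b : ℝ, 0 < b → s ≤ (m : ℝ)⁻¹ * (b * ∑ i, t i) := by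
      intro b hb
      set c : Fin m → ℝ := fun i => if i = j then (b ^ (m - 1))⁻¹ else b with hcdef
      have hc1 : ∀ i, 0 < c i := by
        intro i
        by_cases hij : i = j <;> simp only [hcdef, hij, if_true, if_false] <;> positivity
      have hc2 : ∏ i, c i = 1 := by
        rw [← Finset.mul_prod_erase Finset.univ c (Finset.mem_univ j)]
        have he : ∏ i ∈ Finset.univ.erase j, c i = b ^ (m - 1) := by
          rw [Finset.prod_congr rfl (fun i hi => ?_), Finset.prod_const,
            Finset.card_erase_of_mem (Finset.mem_univ j), Finset.card_univ, Fintype.card_fin]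
          simp [hcdef, (Finset.mem_erase.1 hi).1]
        rw [he, show c j = (b ^ (m - 1))⁻¹ by simp [hcdef]]
        exact inv_mul_cancel₀ (by positivity)
      refine (h c hc1 hc2).trans (mul_le_mul_of_nonneg_left ?_ (by positivity))
      calc ∑ i, c i * t i
          = c j * t j + ∑ i ∈ Finset.univ.erase j, c i * t i :=
            (Finset.add_sum_erase _ _ (Finset.mem_univ j)).symm
        _ = ∑ i ∈ Finset.univ.erase j, b * t i := by
            rw [hj0, mul_zero, zero_add]
            exact Finset.sum_congr rfl fun i hi => by
              simp [hcdef, (Finset.mem_erase.1 hi).1]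
        _ = b * ∑ i ∈ Finset.univ.erase j, t i := (Finset.mul_sum _ _ _).symm
        _ ≤ b * ∑ i, t i := by
            apply mul_le_mul_of_nonneg_left _ hb.le
            exact Finset.sum_le_sum_of_subset_of_nonneg
              (Finset.erase_subset _ _) fun i _ _ => ht i
    have hC : 0 ≤ ∑ i, t i := Finset.sum_nonneg fun i _ => ht i
    have hs0 : s ≤ 0 := by
      rcases eq_or_lt_of_le hC with hC0 | hC0
      · simpa [← hC0] using hbound 1 one_pos
      · by_contra hcon
        push_neg at hcon
        have h6 := hbound (s * m / (2 * ∑ i, t i)) (by positivity)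
        have h7 : (m : ℝ)⁻¹ * (s * m / (2 * ∑ i, t i) * ∑ i, t i) = s / 2 := by
          field_simp
        rw [h7] at h6
        linarith
    rw [le_antisymm hs0 hs, zero_pow hm.ne']

end CohenAux

theorem numRad_pow_le_prod_numRad_mul_right
    {X : Type*} [MeasurableSpace X] (μ : Measure X) [SigmaFinite μ]
    (m : ℕ) (D : Fin m → (Lp ℂ 2 μ →L[ℂ] Lp ℂ 2 μ)) (d : Fin m → X → ℝ)
    (hd : ∀ i, ∀ᵐ x ∂μ, 0 ≤ d i x)
    (hD : ∀ i, ∀ f : Lp ℂ 2 μ, (D i f : X → ℂ) =ᵐ[μ] fun x => (d i x : ℂ) * f x)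
    (hprod : ∀ᵐ x ∂μ, 1 ≤ ∏ i, d i x)
    (A : Lp ℂ 2 μ →L[ℂ] Lp ℂ 2 μ) (hA : IsPosOp A) :
    numRad A ^ m ≤ ∏ i, numRad (A.comp (D i)) := by
  classical
  rcases Nat.eq_zero_or_pos m with hm | hm
  · subst hm; simp
  have hWnn : ∀ i, (0 : ℝ) ≤ numRad (A.comp (D i)) := fun i => CohenAux.numRad_nonneg _
  have hprodW : (0 : ℝ) ≤ ∏ i, numRad (A.comp (D i)) := Finset.prod_nonneg fun i _ => hWnn i
  have hkey : ∀ f : Lp ℂ 2 μ, ‖f‖ = 1 →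
      ‖(inner ℂ (A f) f : ℂ)‖ ^ m ≤ ∏ i, numRad (A.comp (D i)) := by
    intro f hf
    set g : Lp ℂ 2 μ := CohenAux.absLp f with hgdef
    have hgn : ‖g‖ = 1 := by rw [hgdef, CohenAux.norm_absLp, hf]
    have hgpos := CohenAux.absLp_nonneg f
    have habs := CohenAux.abs_A_le hA f
    have hApos := hA g hgpos
    set s : ℝ := Complex.re (inner ℂ (A g) g : ℂ) with hs
    -- rewrite inner as integral of pointwise inner
    have hinner_int : ∀ u v : Lp ℂ 2 μ,
        (inner ℂ u v : ℂ) = ∫ x, (inner ℂ (u x) (v x) : ℂ) ∂μ := fun u v =>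
      MeasureTheory.L2.inner_def u v
    have hre_int : ∀ u v : Lp ℂ 2 μ,
        Integrable (fun x => Complex.re (inner ℂ (u x) (v x) : ℂ)) μ := by
      intro u v
      have := (MeasureTheory.L2.integrable_inner (𝕜 := ℂ) u v).re
      simpa [RCLike.re_to_complex] using this
    have hre_eq : ∀ u v : Lp ℂ 2 μ,
        Complex.re (inner ℂ u v : ℂ) = ∫ x, Complex.re (inner ℂ (u x) (v x) : ℂ) ∂μ := by
      intro u v
      rw [hinner_int u v]
      have := _root_.integral_re (μ := μ)
        (f := fun x => (inner ℂ (u x) (v x) : ℂ)) (MeasureTheory.L2.integrable_inner u v)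
      simpa [RCLike.re_to_complex] using this.symm
    -- step 1 : ‖⟨Af, f⟩‖ ≤ s
    have step1 : ‖(inner ℂ (A f) f : ℂ)‖ ≤ s := by
      calc ‖(inner ℂ (A f) f : ℂ)‖
          = ‖∫ x, (inner ℂ ((A f) x) (f x) : ℂ) ∂μ‖ := by rw [hinner_int]
        _ ≤ ∫ x, ‖(inner ℂ ((A f) x) (f x) : ℂ)‖ ∂μ := norm_integral_le_integral_norm _
        _ ≤ ∫ x, Complex.re (inner ℂ ((A g) x) (g x) : ℂ) ∂μ := by
            apply integral_mono_ae ((MeasureTheory.L2.integrable_inner _ _).norm)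
              (hre_int _ _)
            filter_upwards [habs, hApos, CohenAux.coeFn_absLp f] with x hx1 hx2 hx3
            simp only [RCLike.inner_apply']
            rw [norm_mul, RCLike.norm_conj]
            have hgx : g x = ((‖f x‖ : ℝ) : ℂ) := hx3
            rw [hgx, Complex.mul_re, Complex.ofReal_re, Complex.ofReal_im, mul_zero, sub_zero,
              Complex.conj_re]
            exact mul_le_mul_of_nonneg_right hx1 (norm_nonneg _)
        _ = s := (hre_eq _ _).symm
    have hgco : ⇑g =ᵐ[μ] fun x => ((‖f x‖ : ℝ) : ℂ) := by
      rw [hgdef]; exact CohenAux.coeFn_absLp f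
    have hgpos' : ∀ᵐ x ∂μ, 0 ≤ (g x).re ∧ (g x).im = 0 := hgpos
    have hs0 : 0 ≤ s := (norm_nonneg _).trans step1
    have hDg : ∀ᵐ x ∂μ, ∀ i, ((D i) g) x = ((d i x : ℝ) : ℂ) * ((‖f x‖ : ℝ) : ℂ) := by
      rw [ae_all_iff]
      intro i
      filter_upwards [hD i g, hgco] with x h1 h2
      rw [h1, h2]
    have hdall : ∀ᵐ x ∂μ, ∀ i, 0 ≤ d i x := ae_all_iff.2 hd
    have step2 : ∀ c : Fin m → ℝ, (∀ i, 0 < c i) → ∏ i, c i = 1 →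
        s ≤ (m : ℝ)⁻¹ * ∑ i, c i * numRad (A.comp (D i)) := by
      intro c hc hc1
      set ψ : Lp ℂ 2 μ := (((m : ℝ)⁻¹ : ℝ) : ℂ) • ∑ i, ((c i : ℝ) : ℂ) • (D i) g with hψdef
      have hψc : ⇑ψ =ᵐ[μ]
          fun x => ((((m : ℝ)⁻¹ * ∑ i, c i * (d i x * ‖f x‖)) : ℝ) : ℂ) := by
        have hsm : ∀ᵐ x ∂μ, ∀ i,
            ((((c i : ℝ) : ℂ) • (D i) g) : Lp ℂ 2 μ) x = ((c i : ℝ) : ℂ) * ((D i) g) x := by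
          rw [ae_all_iff]
          intro i
          filter_upwards [Lp.coeFn_smul (((c i : ℝ)) : ℂ) ((D i) g)] with x h
          rw [h, Pi.smul_apply, smul_eq_mul]
        filter_upwards [Lp.coeFn_smul ((((m : ℝ)⁻¹ : ℝ)) : ℂ)
            (∑ i, ((c i : ℝ) : ℂ) • (D i) g),
          CohenAux.coeFn_sum Finset.univ (fun i => ((c i : ℝ) : ℂ) • (D i) g),
          hsm, hDg] with x h1 h2 h3 h4
        have e : ∑ i, ((((c i : ℝ) : ℂ) • (D i) g) : Lp ℂ 2 μ) x
            = ∑ i, (((c i : ℝ) : ℂ) * (((d i x : ℝ) : ℂ) * ((‖f x‖ : ℝ) : ℂ))) :=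
          Finset.sum_congr rfl fun i _ => by rw [h3 i, h4 i]
        rw [h1, Pi.smul_apply, h2, smul_eq_mul, e]
        push_cast
        rw [Finset.mul_sum]
      have hdom : ∀ᵐ x ∂μ, (g x).re ≤ (ψ x).re ∧ (ψ x).im = 0 := by
        filter_upwards [hψc, hgco, hprod, hdall] with x h1 h2 h3 h4
        rw [h1, h2]
        simp only [Complex.ofReal_re, Complex.ofReal_im]
        refine ⟨?_, trivial⟩
        have hgm : ∏ i, (c i * d i x) ^ ((m : ℝ)⁻¹) ≤ ∑ i, (m : ℝ)⁻¹ * (c i * d i x) :=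
          Real.geom_mean_le_arith_mean_weighted Finset.univ _ _
            (fun i _ => by positivity)
            (by
              rw [Finset.sum_const, Finset.card_univ, Fintype.card_fin, nsmul_eq_mul]
              field_simp)
            (fun i _ => mul_nonneg (hc i).le (h4 i))
        have h5 : (1 : ℝ) ≤ ∏ i, (c i * d i x) ^ ((m : ℝ)⁻¹) := by
          rw [Real.finset_prod_rpow Finset.univ _
            (fun i _ => mul_nonneg (hc i).le (h4 i)) _]
          have h6 : (1 : ℝ) ≤ ∏ i, (c i * d i x) := by
            rw [Finset.prod_mul_distrib, hc1, one_mul]; exact h3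
          calc (1 : ℝ) = 1 ^ ((m : ℝ)⁻¹) := (Real.one_rpow _).symm
            _ ≤ (∏ i, (c i * d i x)) ^ ((m : ℝ)⁻¹) :=
              Real.rpow_le_rpow zero_le_one h6 (by positivity)
        have h7 : (1 : ℝ) ≤ ∑ i, (m : ℝ)⁻¹ * (c i * d i x) := h5.trans hgm
        calc ‖f x‖ = 1 * ‖f x‖ := (one_mul _).symm
          _ ≤ (∑ i, (m : ℝ)⁻¹ * (c i * d i x)) * ‖f x‖ :=
            mul_le_mul_of_nonneg_right h7 (norm_nonneg _)
          _ = (m : ℝ)⁻¹ * ∑ i, c i * (d i x * ‖f x‖) := by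
            rw [Finset.sum_mul, Finset.mul_sum]
            exact Finset.sum_congr rfl fun i _ => by ring
      have hmono := CohenAux.mono hA hgpos' hdom
      have hint : s ≤ Complex.re (inner ℂ (A ψ) g : ℂ) := by
        rw [hs, hre_eq, hre_eq]
        apply integral_mono_ae (hre_int _ _) (hre_int _ _)
        filter_upwards [hmono, hgpos'] with x h1 h3
        simp only [RCLike.inner_apply']
        rw [Complex.mul_re, Complex.mul_re, Complex.conj_re, Complex.conj_re,
          Complex.conj_im, Complex.conj_im]
        simp only [h3.2, mul_zero, sub_zero]
        exact mul_le_mul_of_nonneg_right h1.1 h3.1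
      have hAψ : A ψ = (((m : ℝ)⁻¹ : ℝ) : ℂ) • ∑ i, ((c i : ℝ) : ℂ) • A ((D i) g) := by
        rw [hψdef, _root_.map_smul, map_sum]
        congr 1
        exact Finset.sum_congr rfl fun i _ => _root_.map_smul A _ _
      have hexp : Complex.re (inner ℂ (A ψ) g : ℂ)
          = (m : ℝ)⁻¹ * ∑ i, c i * Complex.re (inner ℂ (A ((D i) g)) g : ℂ) := by
        rw [hAψ, inner_smul_left, sum_inner]
        simp only [inner_smul_left, Complex.conj_ofReal]
        rw [Complex.re_ofReal_mul, Complex.re_sum]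
        congr 1
        exact Finset.sum_congr rfl fun i _ => Complex.re_ofReal_mul _ _
      have hW : ∀ i, Complex.re (inner ℂ (A ((D i) g)) g : ℂ) ≤ numRad (A.comp (D i)) := by
        intro i
        have hmem : ‖(inner ℂ ((A.comp (D i)) g) g : ℂ)‖ ∈
            {r : ℝ | ∃ f : Lp ℂ 2 μ, ‖f‖ = 1 ∧ r = ‖(inner ℂ ((A.comp (D i)) f) f : ℂ)‖} :=
          ⟨g, hgn, rfl⟩
        calc Complex.re (inner ℂ (A ((D i) g)) g : ℂ)
            ≤ ‖(inner ℂ (A ((D i) g)) g : ℂ)‖ :=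
              Complex.re_le_norm _
          _ = ‖(inner ℂ ((A.comp (D i)) g) g : ℂ)‖ := rfl
          _ ≤ numRad (A.comp (D i)) := le_csSup (CohenAux.bddAbove_numRadSet _) hmem
      calc s ≤ Complex.re (inner ℂ (A ψ) g : ℂ) := hint
        _ = (m : ℝ)⁻¹ * ∑ i, c i * Complex.re (inner ℂ (A ((D i) g)) g : ℂ) := hexp
        _ ≤ (m : ℝ)⁻¹ * ∑ i, c i * numRad (A.comp (D i)) := by
            apply mul_le_mul_of_nonneg_left _ (by positivity)
            exact Finset.sum_le_sum fun i _ =>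
              mul_le_mul_of_nonneg_left (hW i) (hc i).le
    have hfinal := CohenAux.scalar_opt hm s hs0 (fun i => numRad (A.comp (D i))) hWnn step2
    calc ‖(inner ℂ (A f) f : ℂ)‖ ^ m ≤ s ^ m := pow_le_pow_left₀ (norm_nonneg _) step1 m
      _ ≤ ∏ i, numRad (A.comp (D i)) := hfinal
  -- conclude from hkey
  set B : ℝ := (∏ i, numRad (A.comp (D i))) ^ ((m : ℝ)⁻¹) with hB
  have hBnn : 0 ≤ B := Real.rpow_nonneg hprodW _
  have hmR : (0 : ℝ) < m := by exact_mod_cast hm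
  have hBpow : B ^ m = ∏ i, numRad (A.comp (D i)) := by
    rw [hB, ← Real.rpow_natCast ((∏ i, numRad (A.comp (D i))) ^ ((m : ℝ)⁻¹)) m,
      ← Real.rpow_mul hprodW, inv_mul_cancel₀ hmR.ne', Real.rpow_one]
  have hle : numRad A ≤ B := by
    apply Real.sSup_le _ hBnn
    rintro r ⟨f, hf, rfl⟩
    have h1 := hkey f hf
    rw [← hBpow] at h1
    exact le_of_pow_le_pow_left₀ hm.ne' hBnn h1
  calc numRad A ^ m ≤ B ^ m := pow_le_pow_left₀ (CohenAux.numRad_nonneg A) hle m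
    _ = ∏ i, numRad (A.comp (D i)) := hBpow
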